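/- For all nonnegative integers k and m, Σ_{j=0}^{k} (-1)^j C(k,j) β_{m+j} β_{k-j} + Σ_{j=0}^{m} (-1)^j C(m,j) β_{k+j} β_{m-j} = β_k β_m − ( k!·m!/(k+m+1)! + (-1)^k/(k+1) + (-1)^m/(m+1) ) β_{k+m+1}. -/

import Mathlib

open Finset PowerSeries

/-- β_m := ζ(-m) = (-1)^m B_{m+1}/(m+1), with the convention B₁ = -1/2. -/
noncomputable def beta (m : ℕ) : ℚ := (-1 : ℚ)^m * bernoulli (m+1) / (m+1)

namespace Niels


abbrev R : Type := PowerSeries ℚ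
abbrev A : Type := PowerSeries R

noncomputable def c2 (k m : ℕ) (F : A) : ℚ :=
  PowerSeries.coeff (R := ℚ) m (PowerSeries.coeff (R := R) k F)

lemma A_ext {F G : A} (h : ∀ k m, c2 k m F = c2 k m G) : F = G := by
  apply PowerSeries.ext
  intro k
  apply PowerSeries.ext
  intro m
  exact h k m

lemma key (k m : ℕ) (f g : ℕ → ℚ) :
    ∑ i ∈ range (k+1), ∑ j ∈ range (m+1),
      (((i+j).choose i : ℚ) * f (i+j)) * ((((k-i)+(m-j)).choose (k-i) : ℚ) * g ((k-i)+(m-j)))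
      = ((k+m).choose k : ℚ) * ∑ n ∈ range (k+m+1), f n * g (k+m-n) := by
  have hI : ∀ i ∈ range (k+1),
      ∑ j ∈ range (m+1), (((i+j).choose i : ℚ) * f (i+j)) *
          ((((k-i)+(m-j)).choose (k-i) : ℚ) * g ((k-i)+(m-j)))
      = ∑ n ∈ range (k+m+1),
          ((n.choose i : ℚ) * ((k+m-n).choose (k-i) : ℚ)) * (f n * g (k+m-n)) := by
    intro i hi
    rw [mem_range] at hi
    have hik : i ≤ k := by omega
    have hsub : Finset.Ico i (i+(m+1)) ⊆ range (k+m+1) := by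
      intro n hn
      rw [Finset.mem_Ico] at hn
      rw [mem_range]
      omega
    have hvan : ∀ n ∈ range (k+m+1), n ∉ Finset.Ico i (i+(m+1)) →
        ((n.choose i : ℚ) * ((k+m-n).choose (k-i) : ℚ)) * (f n * g (k+m-n)) = 0 := by
      intro n hn hn2
      rw [mem_range] at hn
      rw [Finset.mem_Ico] at hn2
      rcases lt_or_ge n i with h | h
      · rw [Nat.choose_eq_zero_of_lt h]
        push_cast
        ring
      · have h2 : k + m - n < k - i := by omega
        rw [Nat.choose_eq_zero_of_lt h2]
        push_cast
        ring
    rw [← Finset.sum_subset hsub hvan, Finset.sum_Ico_eq_sum_range]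
    simp only [Nat.add_sub_cancel_left]
    apply Finset.sum_congr rfl
    intro j hj
    rw [mem_range] at hj
    have h2 : k + m - (i + j) = (k - i) + (m - j) := by omega
    rw [h2]
    ring
  rw [Finset.sum_congr rfl hI, Finset.sum_comm, Finset.mul_sum]
  apply Finset.sum_congr rfl
  intro n hn
  rw [mem_range] at hn
  rw [← Finset.sum_mul]
  congr 1
  have hv := Nat.add_choose_eq n (k+m-n) k
  rw [show n + (k+m-n) = k+m by omega] at hv
  rw [hv, Finset.Nat.sum_antidiagonal_eq_sum_range_succ_mk]
  push_cast
  rfl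

noncomputable def phiFun (a b : ℚ) (F : PowerSeries ℚ) : A :=
  PowerSeries.mk fun k => PowerSeries.mk fun m =>
    a ^ k * b ^ m * ((k+m).choose k) * (PowerSeries.coeff (R := ℚ) (k+m) F)

lemma c2_phiFun (a b : ℚ) (F : PowerSeries ℚ) (k m : ℕ) :
    c2 k m (phiFun a b F) = a ^ k * b ^ m * ((k+m).choose k) * (PowerSeries.coeff (R := ℚ) (k+m) F) := by
  simp [c2, phiFun, coeff_mk]

lemma c2_mul (F G : A) (k m : ℕ) :
    c2 k m (F * G) = ∑ i ∈ range (k+1), ∑ j ∈ range (m+1),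
      (c2 i j F) * (c2 (k-i) (m-j) G) := by
  simp only [c2, PowerSeries.coeff_mul, map_sum, Finset.Nat.sum_antidiagonal_eq_sum_range_succ_mk]

lemma phiFun_mul (a b : ℚ) (F G : PowerSeries ℚ) :
    phiFun a b (F * G) = phiFun a b F * phiFun a b G := by
  apply PowerSeries.ext; intro k
  apply PowerSeries.ext; intro m
  show c2 k m (phiFun a b (F * G)) = c2 k m (phiFun a b F * phiFun a b G)
  rw [c2_mul]
  have h3 : ∀ i ∈ range (k+1), ∀ j ∈ range (m+1),
      (c2 i j (phiFun a b F)) * (c2 (k-i) (m-j) (phiFun a b G))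
      = a ^ k * b ^ m * ((((i+j).choose i : ℚ) * (PowerSeries.coeff (R := ℚ) (i+j) F)) *
          ((((k-i)+(m-j)).choose (k-i) : ℚ) * (PowerSeries.coeff (R := ℚ) ((k-i)+(m-j)) G))) := by
    intro i hi j hj
    rw [mem_range] at hi hj
    have ha : a ^ i * a ^ (k-i) = a ^ k := by
      rw [← pow_add, show i + (k - i) = k by omega]
    have hb : b ^ j * b ^ (m-j) = b ^ m := by
      rw [← pow_add, show j + (m - j) = m by omega]
    rw [c2_phiFun, c2_phiFun]
    calc a ^ i * b ^ j * ((i+j).choose i : ℚ) * (PowerSeries.coeff (R := ℚ) (i+j) F) *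
          (a ^ (k-i) * b ^ (m-j) * (((k-i)+(m-j)).choose (k-i) : ℚ) * (PowerSeries.coeff (R := ℚ) ((k-i)+(m-j)) G))
        = (a ^ i * a ^ (k-i)) * ((b ^ j * b ^ (m-j)) * ((((i+j).choose i : ℚ) * (PowerSeries.coeff (R := ℚ) (i+j) F)) *
            ((((k-i)+(m-j)).choose (k-i) : ℚ) * (PowerSeries.coeff (R := ℚ) ((k-i)+(m-j)) G)))) := by ring
      _ = _ := by rw [ha, hb]; ring
  rw [Finset.sum_congr rfl (fun i hi => Finset.sum_congr rfl (fun j hj => h3 i hi j hj))]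
  simp only [← Finset.mul_sum]
  rw [key k m (fun n => PowerSeries.coeff (R := ℚ) n F) (fun n => PowerSeries.coeff (R := ℚ) n G)]
  rw [c2_phiFun, PowerSeries.coeff_mul, Finset.Nat.sum_antidiagonal_eq_sum_range_succ_mk]
  ring

lemma c2_one (k m : ℕ) : c2 k m (1 : A) = if k = 0 ∧ m = 0 then 1 else 0 := by
  simp only [c2, PowerSeries.coeff_one]
  rcases k with _ | k
  · simp [PowerSeries.coeff_one]
  · simp

noncomputable def Phi (a b : ℚ) : PowerSeries ℚ →+* A where
  toFun := phiFun a b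
  map_one' := by
    apply A_ext
    intro k m
    rw [c2_phiFun, c2_one, PowerSeries.coeff_one]
    rcases k with _ | k
    · rcases m with _ | m <;> simp
    · simp only [Nat.succ_ne_zero, false_and, if_false, Nat.cast_ofNat]
      rcases m with _ | m <;> simp
  map_mul' := phiFun_mul a b
  map_zero' := by
    apply A_ext
    intro k m
    rw [c2_phiFun]
    simp [c2]
  map_add' := by
    intro F G
    apply A_ext
    intro k m
    simp only [c2, map_add, phiFun, coeff_mk]
    ring

noncomputable def xx : A := PowerSeries.X
noncomputable def yy : A := PowerSeries.C (R := R) PowerSeries.X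

lemma c2_xx (k m : ℕ) : c2 k m xx = if k = 1 ∧ m = 0 then 1 else 0 := by
  simp only [c2, xx, PowerSeries.coeff_X]
  rcases k with _ | k
  · simp
  · rcases k with _ | k
    · simp [PowerSeries.coeff_one]
    · simp

lemma c2_yy (k m : ℕ) : c2 k m yy = if k = 0 ∧ m = 1 then 1 else 0 := by
  simp only [c2, yy, PowerSeries.coeff_C]
  rcases k with _ | k
  · rcases m with _ | m
    · simp [PowerSeries.coeff_X]
    · rcases m with _ | m <;> simp [PowerSeries.coeff_X]
  · simp

lemma Phi_X (a b : ℚ) : Phi a b PowerSeries.X =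
    PowerSeries.C (R := R) (PowerSeries.C (R := ℚ) a) * xx + PowerSeries.C (R := R) (PowerSeries.C (R := ℚ) b) * yy := by
  apply A_ext
  intro k m
  have hL : c2 k m (Phi a b PowerSeries.X)
      = a ^ k * b ^ m * ((k+m).choose k) * (PowerSeries.coeff (R := ℚ) (k+m) PowerSeries.X) := c2_phiFun a b _ k m
  rw [hL]
  have hR : c2 k m (PowerSeries.C (R := R) (PowerSeries.C (R := ℚ) a) * xx + PowerSeries.C (R := R) (PowerSeries.C (R := ℚ) b) * yy)
      = a * c2 k m xx + b * c2 k m yy := by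
    simp only [c2, map_add, PowerSeries.coeff_C_mul, map_mul]
  rw [hR, c2_xx, c2_yy, PowerSeries.coeff_X]
  rcases k with _ | k
  · rcases m with _ | m
    · simp
    · rcases m with _ | m <;> simp
  · rcases k with _ | k
    · rcases m with _ | m
      · simp
      · simp only [Nat.succ_ne_zero, and_false, false_and, if_false]
        norm_num
    · have h1 : ¬ (k + 1 + 1 + m = 1) := by omega
      simp only [h1, if_false, Nat.succ_ne_zero, false_and, and_false, if_false]
      norm_num

noncomputable def Ee : PowerSeries ℚ := PowerSeries.exp ℚ - 1
noncomputable def ff : PowerSeries ℚ := PowerSeries.mk fun n => beta n / n.factorial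

lemma base : PowerSeries.X * ff * Ee = Ee - PowerSeries.X * Ee - PowerSeries.X := by
  have hg : bernoulliPowerSeries ℚ * Ee = PowerSeries.X := by
    rw [Ee]
    exact bernoulliPowerSeries_mul_exp_sub_one ℚ
  have hf1 : PowerSeries.X * (ff + 1) = 1 - bernoulliPowerSeries ℚ := by
    apply PowerSeries.ext
    intro n
    rcases n with _ | n
    · simp [bernoulliPowerSeries, coeff_mk]
    · rw [PowerSeries.coeff_succ_X_mul]
      simp only [map_add, map_sub, PowerSeries.coeff_one, bernoulliPowerSeries, coeff_mk, ff, Algebra.algebraMap_self, RingHom.id_apply]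
      rcases n with _ | s
      · norm_num [beta, bernoulli_one]
      · have hfact : ((s+2).factorial : ℚ) = (s+2) * (s+1).factorial := by
          rw [Nat.factorial_succ]; push_cast; ring
        simp only [Nat.succ_ne_zero, if_false, add_zero]
        rcases Nat.even_or_odd (s+1) with he | ho
        · have hodd : bernoulli (s+2) = 0 := by
            rw [bernoulli_eq_bernoulli'_of_ne_one (by omega)]
            apply bernoulli'_eq_zero_of_odd
            · rcases he with ⟨t, ht⟩
              exact ⟨t, by omega⟩
            · omega
          simp [beta, hodd]
        · have hpow : (-1 : ℚ) ^ (s+1) = -1 := ho.neg_one_pow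
          rw [beta, hpow]
          have h1 : ((s+1) + 1 : ℚ) ≠ 0 := by positivity
          have h2 : ((s+1).factorial : ℚ) ≠ 0 := by exact_mod_cast (s+1).factorial_ne_zero
          rw [div_div, show s+1+1 = s+2 from rfl, hfact]
          push_cast [Rat.cast_id]
          ring
  have hEe : Ee = PowerSeries.exp ℚ - 1 := rfl
  linear_combination Ee * hf1 - hg

lemma cast_choose_fact (i j : ℕ) : (((i+j).choose i : ℚ)) * (i.factorial * j.factorial) = (i+j).factorial := by
  have h := Nat.choose_mul_factorial_mul_factorial (Nat.le_add_right i j)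
  rw [Nat.add_sub_cancel_left] at h
  exact_mod_cast congrArg (fun n : ℕ => (n : ℚ)) (by rw [← h]; ring)

lemma exp_sum_aux (a c : ℚ) (k : ℕ) :
    ∑ i ∈ range (k+1), a ^ i * c ^ (k-i) / (i.factorial * (k-i).factorial)
      = (a + c) ^ k / k.factorial := by
  rw [add_pow]
  rw [Finset.sum_div]
  apply Finset.sum_congr rfl
  intro i hi
  rw [mem_range] at hi
  have hik : i ≤ k := by omega
  have h := Nat.choose_mul_factorial_mul_factorial hik
  have h2 : ((k.choose i : ℚ)) * (i.factorial * (k-i).factorial) = k.factorial := by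
    exact_mod_cast congrArg (fun n : ℕ => (n : ℚ)) (by rw [← h]; ring)
  have hf1 : (i.factorial : ℚ) ≠ 0 := by exact_mod_cast i.factorial_ne_zero
  have hf2 : ((k-i).factorial : ℚ) ≠ 0 := by exact_mod_cast (k-i).factorial_ne_zero
  have hf3 : (k.factorial : ℚ) ≠ 0 := by exact_mod_cast k.factorial_ne_zero
  field_simp
  linear_combination (- (a ^ i * c ^ (k-i))) * h2

lemma phi_exp_mul (a b c d : ℚ) :
    phiFun a b (PowerSeries.exp ℚ) * phiFun c d (PowerSeries.exp ℚ)
      = phiFun (a+c) (b+d) (PowerSeries.exp ℚ) := by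
  apply A_ext
  intro k m
  rw [c2_mul, c2_phiFun]
  have hcoe : ∀ n : ℕ, PowerSeries.coeff (R := ℚ) n (PowerSeries.exp ℚ) = 1 / n.factorial := by
    intro n
    simp [PowerSeries.exp, coeff_mk]
  have hterm : ∀ i ∈ range (k+1), ∀ j ∈ range (m+1),
      c2 i j (phiFun a b (PowerSeries.exp ℚ)) * c2 (k-i) (m-j) (phiFun c d (PowerSeries.exp ℚ))
      = (a ^ i * c ^ (k-i) / (i.factorial * (k-i).factorial)) *
        (b ^ j * d ^ (m-j) / (j.factorial * (m-j).factorial)) := by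
    intro i _ j _
    rw [c2_phiFun, c2_phiFun, hcoe, hcoe]
    have h1 := cast_choose_fact i j
    have h2 := cast_choose_fact (k-i) (m-j)
    have hf : ∀ n : ℕ, ((n.factorial : ℚ)) ≠ 0 := fun n => by exact_mod_cast n.factorial_ne_zero
    field_simp
    linear_combination (a^i * b^j * c^(k-i) * d^(m-j) * ((k-i+(m-j)).factorial : ℚ)) * h1
      + (a^i * b^j * c^(k-i) * d^(m-j) * ((i+j).choose i : ℚ) * (i.factorial : ℚ) * (j.factorial : ℚ)) * h2
  rw [Finset.sum_congr rfl (fun i hi => Finset.sum_congr rfl (fun j hj => hterm i hi j hj))]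
  have hsep : ∑ i ∈ range (k+1), ∑ j ∈ range (m+1),
      (a ^ i * c ^ (k-i) / (i.factorial * (k-i).factorial)) *
        (b ^ j * d ^ (m-j) / (j.factorial * (m-j).factorial))
      = (∑ i ∈ range (k+1), a ^ i * c ^ (k-i) / (i.factorial * (k-i).factorial)) *
        (∑ j ∈ range (m+1), b ^ j * d ^ (m-j) / (j.factorial * (m-j).factorial)) := by
    rw [Finset.sum_mul_sum]
  rw [hsep, exp_sum_aux, exp_sum_aux, hcoe]
  have h3 := cast_choose_fact k m
  have hf : ∀ n : ℕ, ((n.factorial : ℚ)) ≠ 0 := fun n => by exact_mod_cast n.factorial_ne_zero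
  field_simp
  linear_combination (- ((a+c)^k * (b+d)^m)) * h3


noncomputable def fx : A := Phi 1 0 ff
noncomputable def fy : A := Phi 0 1 ff
noncomputable def fu : A := Phi (-1) 1 ff
noncomputable def fv : A := Phi 1 (-1) ff
noncomputable def Ex : A := Phi 1 0 Ee
noncomputable def Ey : A := Phi 0 1 Ee
noncomputable def Eu : A := Phi (-1) 1 Ee
noncomputable def Ev : A := Phi 1 (-1) Ee

lemma PhiX10 : Phi 1 0 PowerSeries.X = xx := by
  rw [Phi_X]; simp

lemma PhiX01 : Phi 0 1 PowerSeries.X = yy := by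
  rw [Phi_X]; simp

lemma PhiXm11 : Phi (-1) 1 PowerSeries.X = yy - xx := by
  rw [Phi_X]; simp [map_neg]; ring

lemma PhiX1m1 : Phi 1 (-1) PowerSeries.X = xx - yy := by
  rw [Phi_X]; simp [map_neg]; ring

lemma hrel (a b : ℚ) : (Phi a b PowerSeries.X) * (Phi a b ff) * (Phi a b Ee)
    = Phi a b Ee - (Phi a b PowerSeries.X) * (Phi a b Ee) - Phi a b PowerSeries.X := by
  have h := congrArg (Phi a b) base
  simpa only [map_mul, map_sub] using h

lemma h1 : xx * fx * Ex = Ex - xx * Ex - xx := by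
  have h := hrel 1 0
  rwa [PhiX10] at h

lemma h2 : yy * fy * Ey = Ey - yy * Ey - yy := by
  have h := hrel 0 1
  rwa [PhiX01] at h

lemma h3 : (yy - xx) * fu * Eu = Eu - (yy - xx) * Eu - (yy - xx) := by
  have h := hrel (-1) 1
  rwa [PhiXm11] at h

lemma h4 : (xx - yy) * fv * Ev = Ev - (xx - yy) * Ev - (xx - yy) := by
  have h := hrel 1 (-1)
  rwa [PhiX1m1] at h

lemma Phi_exp_eq (a b : ℚ) : Phi a b (PowerSeries.exp ℚ) = 1 + Phi a b Ee := by
  have : (PowerSeries.exp ℚ) = Ee + 1 := by rw [Ee]; ring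
  rw [this, map_add, map_one]
  ring

lemma Phi00_exp : Phi 0 0 (PowerSeries.exp ℚ) = 1 := by
  apply A_ext
  intro k m
  rw [show ((Phi 0 0) (PowerSeries.exp ℚ)) = phiFun 0 0 (PowerSeries.exp ℚ) from rfl, c2_phiFun, c2_one]
  rcases k with _ | k
  · rcases m with _ | m
    · simp [PowerSeries.exp, coeff_mk]
    · simp
  · simp

lemma h5 : (1 + Eu) * (1 + Ex) = 1 + Ey := by
  have h := phi_exp_mul (-1) 1 1 0
  have e1 : phiFun (-1) 1 (PowerSeries.exp ℚ) = 1 + Eu := Phi_exp_eq (-1) 1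
  have e2 : phiFun 1 0 (PowerSeries.exp ℚ) = 1 + Ex := Phi_exp_eq 1 0
  have e3 : phiFun 0 1 (PowerSeries.exp ℚ) = 1 + Ey := Phi_exp_eq 0 1
  rw [e1, e2] at h
  rw [h, show (-1 : ℚ) + 1 = 0 by ring, show (1 : ℚ) + 0 = 1 by ring, e3]

lemma h6 : (1 + Ev) * (1 + Ey) = 1 + Ex := by
  have h := phi_exp_mul 1 (-1) 0 1
  have e1 : phiFun 1 (-1) (PowerSeries.exp ℚ) = 1 + Ev := Phi_exp_eq 1 (-1)
  have e2 : phiFun 0 1 (PowerSeries.exp ℚ) = 1 + Ey := Phi_exp_eq 0 1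
  have e3 : phiFun 1 0 (PowerSeries.exp ℚ) = 1 + Ex := Phi_exp_eq 1 0
  rw [e1, e2] at h
  rw [h, show (1 : ℚ) + 0 = 1 by ring, show (-1 : ℚ) + 1 = 0 by ring, e3]

noncomputable def Dd : A := PowerSeries.mk fun k => PowerSeries.mk fun m =>
  beta (k+m+1) / (k+m+1).factorial
noncomputable def Pp : A := PowerSeries.mk fun k => PowerSeries.mk fun m =>
  (-1)^k * beta (k+m+1) / ((k+1).factorial * m.factorial)
noncomputable def Qq : A := PowerSeries.mk fun k => PowerSeries.mk fun m =>
  (-1)^m * beta (k+m+1) / (k.factorial * (m+1).factorial)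

lemma c2_Dd (k m : ℕ) : c2 k m Dd = beta (k+m+1) / (k+m+1).factorial := by
  simp [c2, Dd, coeff_mk]
lemma c2_Pp (k m : ℕ) : c2 k m Pp = (-1)^k * beta (k+m+1) / ((k+1).factorial * m.factorial) := by
  simp [c2, Pp, coeff_mk]
lemma c2_Qq (k m : ℕ) : c2 k m Qq = (-1)^m * beta (k+m+1) / (k.factorial * (m+1).factorial) := by
  simp [c2, Qq, coeff_mk]

lemma c2_xx_mul (F : A) (k m : ℕ) :
    c2 k m (xx * F) = if k = 0 then 0 else c2 (k-1) m F := by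
  rcases k with _ | k
  · simp [c2, xx, PowerSeries.coeff_zero_X_mul]
  · simp [c2, xx, PowerSeries.coeff_succ_X_mul]

lemma c2_yy_mul (F : A) (k m : ℕ) :
    c2 k m (yy * F) = if m = 0 then 0 else c2 k (m-1) F := by
  have h : PowerSeries.coeff (R := R) k (yy * F)
      = PowerSeries.X * PowerSeries.coeff (R := R) k F := by
    rw [yy, PowerSeries.coeff_C_mul]
  rcases m with _ | m
  · simp [c2, h, PowerSeries.coeff_zero_X_mul]
  · simp [c2, h, PowerSeries.coeff_succ_X_mul]

lemma c2_ffPhi (a b : ℚ) (k m : ℕ) :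
    c2 k m (Phi a b ff) = a ^ k * b ^ m * ((k+m).choose k) * (beta (k+m) / (k+m).factorial) := by
  rw [show ((Phi a b) ff) = phiFun a b ff from rfl, c2_phiFun]
  simp [ff, coeff_mk]

lemma h7 : (xx - yy) * Dd = fx - fy := by
  apply A_ext
  intro k m
  have expand : c2 k m ((xx - yy) * Dd) = c2 k m (xx * Dd) - c2 k m (yy * Dd) := by
    rw [sub_mul]; simp [c2, map_sub]
  rw [expand, show c2 k m (fx - fy) = c2 k m fx - c2 k m fy by simp [c2, map_sub],
     c2_xx_mul, c2_yy_mul, fx, fy, c2_ffPhi, c2_ffPhi]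
  rcases k with _ | k <;> rcases m with _ | m <;>
    simp only [c2_Dd, Nat.succ_ne_zero, if_true, if_false, Nat.succ_sub_one, zero_pow, one_pow,
      Nat.zero_add, Nat.add_zero, pow_zero, ne_eq, not_false_iff, zero_add, add_zero, if_neg]
  · norm_num
  · norm_num
  · norm_num [Nat.choose_self]
  · have e1 : k + (m+1) + 1 = (k+1) + m + 1 := by omega
    have e2 : k + 1 + (m + 1) = k + (m+1) + 1 := by omega
    rw [e1]
    norm_num

lemma h8 : xx * Pp = fy - fu := by
  apply A_ext
  intro k m
  rw [show c2 k m (fy - fu) = c2 k m fy - c2 k m fu by simp [c2, map_sub],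
    c2_xx_mul, fy, fu, c2_ffPhi, c2_ffPhi]
  rcases k with _ | k
  · norm_num
  · rw [c2_Pp]
    have hc := cast_choose_fact (k+1) m
    have hf : ∀ n : ℕ, ((n.factorial : ℚ)) ≠ 0 := fun n => by exact_mod_cast n.factorial_ne_zero
    simp only [Nat.succ_ne_zero, if_false, Nat.succ_sub_one]
    have e1 : k + m + 1 = k + 1 + m := by omega
    rw [e1, zero_pow (Nat.succ_ne_zero k)]
    field_simp
    linear_combination (((-1:ℚ))^(k+1) * beta (k+1+m)) * hc

lemma h9 : yy * Qq = fx - fv := by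
  apply A_ext
  intro k m
  rw [show c2 k m (fx - fv) = c2 k m fx - c2 k m fv by simp [c2, map_sub],
    c2_yy_mul, fx, fv, c2_ffPhi, c2_ffPhi]
  rcases m with _ | m
  · norm_num
  · rw [c2_Qq]
    have hc := cast_choose_fact k (m+1)
    have hf : ∀ n : ℕ, ((n.factorial : ℚ)) ≠ 0 := fun n => by exact_mod_cast n.factorial_ne_zero
    simp only [Nat.succ_ne_zero, if_false, Nat.succ_sub_one]
    have e2 : k + (m+1) = k + m + 1 := by omega
    rw [e2] at hc
    rw [e2, zero_pow (Nat.succ_ne_zero m)]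
    field_simp
    linear_combination (((-1:ℚ))^(m+1) * beta (k+m+1)) * hc


noncomputable def Zz : A := fu*fx + fv*fy - fx*fy + Dd + Pp + Qq

set_option maxHeartbeats 2000000 in
lemma hZero : (xx^2 * yy^2 * (yy - xx)^3 * Ex * Ey * Eu * Ev * (1+Ex) * (1+Ey)) * Zz = 0 := by
  rw [Zz]
  linear_combination (norm := ring1) (1*xx*yy^4*Ey*Eu*Ev + 1*xx*yy^4*Ey^2*Eu*Ev + 1*xx*yy^4*Ex*Ey*Eu*Ev + 1*xx*yy^4*Ex*Ey^2*Eu*Ev + (-1)*xx*yy^5*Ey*Ev + (-1)*xx*yy^5*Ey*Eu*Ev + (-1)*xx*yy^5*Ey*Eu*Ev*fy + (-1)*xx*yy^5*Ey^2*Ev + (-1)*xx*yy^5*Ey^2*Eu*Ev + (-1)*xx*yy^5*Ey^2*Eu*Ev*fy + (-1)*xx*yy^5*Ex*Ey*Ev + (-1)*xx*yy^5*Ex*Ey*Eu*Ev + (-1)*xx*yy^5*Ex*Ey*Eu*Ev*fy + (-1)*xx*yy^5*Ex*Ey^2*Ev + (-1)*xx*yy^5*Ex*Ey^2*Eu*Ev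 + (-1)*xx*yy^5*Ex*Ey^2*Eu*Ev*fy + (-3)*xx^2*yy^3*Ey*Eu*Ev + (-3)*xx^2*yy^3*Ey^2*Eu*Ev + (-3)*xx^2*yy^3*Ex*Ey*Eu*Ev + (-3)*xx^2*yy^3*Ex*Ey^2*Eu*Ev + 3*xx^2*yy^4*Ey*Ev + 3*xx^2*yy^4*Ey*Eu*Ev + 3*xx^2*yy^4*Ey*Eu*Ev*fy + 3*xx^2*yy^4*Ey^2*Ev + 3*xx^2*yy^4*Ey^2*Eu*Ev + 3*xx^2*yy^4*Ey^2*Eu*Ev*fy + 3*xx^2*yy^4*Ex*Ey*Ev + 3*xx^2*yy^4*Ex*Ey*Eu*Ev + 3*xx^2*yy^4*Ex*Ey*Eu*Ev*fy + 3*xx^2*yy^4*Ex*Ey^2*Ev + 3*xx^2*yy^4*Ex*Ey^2*Eu*Ev + 3*xx^2*yy^4*Ex*Ey^2*Eu*Ev*fy + 3*xx^3*yy^2*Ey*Eu*Ev + 3*xx^3*yy^2*Ey^2*Eu*Ev + 3*xx^3*yy^2*Ex*Ey*Eu*Ev + 3*xx^3*yy^2*Ex*Ey^2*Eu*Ev +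 (-3)*xx^3*yy^3*Ey*Ev + (-3)*xx^3*yy^3*Ey*Eu*Ev + (-3)*xx^3*yy^3*Ey*Eu*Ev*fy + (-3)*xx^3*yy^3*Ey^2*Ev + (-3)*xx^3*yy^3*Ey^2*Eu*Ev + (-3)*xx^3*yy^3*Ey^2*Eu*Ev*fy + (-3)*xx^3*yy^3*Ex*Ey*Ev + (-3)*xx^3*yy^3*Ex*Ey*Eu*Ev + (-3)*xx^3*yy^3*Ex*Ey*Eu*Ev*fy + (-3)*xx^3*yy^3*Ex*Ey^2*Ev + (-3)*xx^3*yy^3*Ex*Ey^2*Eu*Ev + (-3)*xx^3*yy^3*Ex*Ey^2*Eu*Ev*fy + (-1)*xx^4*yy*Ey*Eu*Ev + (-1)*xx^4*yy*Ey^2*Eu*Ev + (-1)*xx^4*yy*Ex*Ey*Eu*Ev + (-1)*xx^4*yy*Ex*Ey^2*Eu*Ev + 1*xx^4*yy^2*Ey*Ev + 1*xx^4*yy^2*Ey*Eu*Ev + 1*xx^4*yy^2*Ey*Eu*Ev*fy + 1*xx^4*yy^2*Ey^2*Ev + 1*xx^4*yy^2*Ey^2*Eu*Ev + 1*xx^4*yy^2*Ey^2*Eu*Ev*fy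 + 1*xx^4*yy^2*Ex*Ey*Ev + 1*xx^4*yy^2*Ex*Ey*Eu*Ev + 1*xx^4*yy^2*Ex*Ey*Eu*Ev*fy + 1*xx^4*yy^2*Ex*Ey^2*Ev + 1*xx^4*yy^2*Ex*Ey^2*Eu*Ev + 1*xx^4*yy^2*Ex*Ey^2*Eu*Ev*fy) * h1 + (1*xx^2*yy^4*Eu*Ev + 1*xx^2*yy^4*Ey*Eu*Ev + (-1)*xx^2*yy^4*Ex*Eu + 1*xx^2*yy^4*Ex*Eu*Ev + (-1)*xx^2*yy^4*Ex*Ey*Eu + 1*xx^2*yy^4*Ex*Ey*Eu*Ev + (-1)*xx^2*yy^4*Ex^2*Eu + (-1)*xx^2*yy^4*Ex^2*Ey*Eu + (-3)*xx^3*yy^3*Eu*Ev + (-3)*xx^3*yy^3*Ey*Eu*Ev + 3*xx^3*yy^3*Ex*Eu + (-3)*xx^3*yy^3*Ex*Eu*Ev + 3*xx^3*yy^3*Ex*Ey*Eu + (-3)*xx^3*yy^3*Ex*Ey*Eu*Ev + 3*xx^3*yy^3*Ex^2*Eu + 3*xx^3*yy^3*Ex^2*Ey*Eu + 3*xx^4*yy^2*Eu*Ev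 + 3*xx^4*yy^2*Ey*Eu*Ev + (-3)*xx^4*yy^2*Ex*Eu + 3*xx^4*yy^2*Ex*Eu*Ev + (-3)*xx^4*yy^2*Ex*Ey*Eu + 3*xx^4*yy^2*Ex*Ey*Eu*Ev + (-3)*xx^4*yy^2*Ex^2*Eu + (-3)*xx^4*yy^2*Ex^2*Ey*Eu + (-1)*xx^5*yy*Eu*Ev + (-1)*xx^5*yy*Ey*Eu*Ev + 1*xx^5*yy*Ex*Eu + (-1)*xx^5*yy*Ex*Eu*Ev + 1*xx^5*yy*Ex*Ey*Eu + (-1)*xx^5*yy*Ex*Ey*Eu*Ev + 1*xx^5*yy*Ex^2*Eu + 1*xx^5*yy*Ex^2*Ey*Eu) * h2 + ((-1)*xx*yy^4*Ex*Ey*Ev + (-1)*xx*yy^4*Ex*Ey^2*Ev + (-1)*xx*yy^4*Ex^2*Ey*Ev + (-1)*xx*yy^4*Ex^2*Ey^2*Ev + 2*xx^2*yy^3*Ex*Ey*Ev + 2*xx^2*yy^3*Ex*Ey^2*Ev + 2*xx^2*yy^3*Ex^2*Ey*Ev + 2*xx^2*yy^3*Ex^2*Ey^2*Ev + 1*xx^2*yy^4*Ex*Ey*Ev*fx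 + 1*xx^2*yy^4*Ex*Ey^2*Ev*fx + 1*xx^2*yy^4*Ex^2*Ey*Ev*fx + 1*xx^2*yy^4*Ex^2*Ey^2*Ev*fx + (-1)*xx^3*yy^2*Ex*Ey*Ev + (-1)*xx^3*yy^2*Ex*Ey^2*Ev + (-1)*xx^3*yy^2*Ex^2*Ey*Ev + (-1)*xx^3*yy^2*Ex^2*Ey^2*Ev + (-2)*xx^3*yy^3*Ex*Ey*Ev*fx + (-2)*xx^3*yy^3*Ex*Ey^2*Ev*fx + (-2)*xx^3*yy^3*Ex^2*Ey*Ev*fx + (-2)*xx^3*yy^3*Ex^2*Ey^2*Ev*fx + 1*xx^4*yy^2*Ex*Ey*Ev*fx + 1*xx^4*yy^2*Ex*Ey^2*Ev*fx + 1*xx^4*yy^2*Ex^2*Ey*Ev*fx + 1*xx^4*yy^2*Ex^2*Ey^2*Ev*fx) * h3 + (1*xx^2*yy^3*Ex*Ey*Eu + 1*xx^2*yy^3*Ex*Ey^2*Eu + 1*xx^2*yy^3*Ex^2*Ey*Eu + 1*xx^2*yy^3*Ex^2*Ey^2*Eu + (-1)*xx^2*yy^4*Ex*Ey*Eu*fy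 + (-1)*xx^2*yy^4*Ex*Ey^2*Eu*fy + (-1)*xx^2*yy^4*Ex^2*Ey*Eu*fy + (-1)*xx^2*yy^4*Ex^2*Ey^2*Eu*fy + (-2)*xx^3*yy^2*Ex*Ey*Eu + (-2)*xx^3*yy^2*Ex*Ey^2*Eu + (-2)*xx^3*yy^2*Ex^2*Ey*Eu + (-2)*xx^3*yy^2*Ex^2*Ey^2*Eu + 2*xx^3*yy^3*Ex*Ey*Eu*fy + 2*xx^3*yy^3*Ex*Ey^2*Eu*fy + 2*xx^3*yy^3*Ex^2*Ey*Eu*fy + 2*xx^3*yy^3*Ex^2*Ey^2*Eu*fy + 1*xx^4*yy*Ex*Ey*Eu + 1*xx^4*yy*Ex*Ey^2*Eu + 1*xx^4*yy*Ex^2*Ey*Eu + 1*xx^4*yy*Ex^2*Ey^2*Eu + (-1)*xx^4*yy^2*Ex*Ey*Eu*fy + (-1)*xx^4*yy^2*Ex*Ey^2*Eu*fy + (-1)*xx^4*yy^2*Ex^2*Ey*Eu*fy + (-1)*xx^4*yy^2*Ex^2*Ey^2*Eu*fy) * h4 + ((-1)*xx^2*yy^5*Ev + (-1)*xx^2*yy^5*Ey*Ev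 + 1*xx^2*yy^5*Ex + 2*xx^2*yy^5*Ex*Ey + 1*xx^2*yy^5*Ex*Ey*Ev + 1*xx^2*yy^5*Ex*Ey^2 + 1*xx^2*yy^5*Ex*Ey^2*Ev + 3*xx^3*yy^4*Ev + 3*xx^3*yy^4*Ey*Ev + (-3)*xx^3*yy^4*Ex + (-6)*xx^3*yy^4*Ex*Ey + (-3)*xx^3*yy^4*Ex*Ey*Ev + (-3)*xx^3*yy^4*Ex*Ey^2 + (-3)*xx^3*yy^4*Ex*Ey^2*Ev + (-3)*xx^4*yy^3*Ev + (-3)*xx^4*yy^3*Ey*Ev + 3*xx^4*yy^3*Ex + 6*xx^4*yy^3*Ex*Ey + 3*xx^4*yy^3*Ex*Ey*Ev + 3*xx^4*yy^3*Ex*Ey^2 + 3*xx^4*yy^3*Ex*Ey^2*Ev + 1*xx^5*yy^2*Ev + 1*xx^5*yy^2*Ey*Ev + (-1)*xx^5*yy^2*Ex + (-2)*xx^5*yy^2*Ex*Ey + (-1)*xx^5*yy^2*Ex*Ey*Ev + (-1)*xx^5*yy^2*Ex*Ey^2 + (-1)*xx^5*yy^2*Ex*Ey^2*Ev) * h5 +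 (1*xx^2*yy^5*Ex + 2*xx^2*yy^5*Ex*Ey + 1*xx^2*yy^5*Ex*Ey^2 + (-3)*xx^3*yy^4*Ex + (-6)*xx^3*yy^4*Ex*Ey + (-3)*xx^3*yy^4*Ex*Ey^2 + 3*xx^4*yy^3*Ex + 6*xx^4*yy^3*Ex*Ey + 3*xx^4*yy^3*Ex*Ey^2 + (-1)*xx^5*yy^2*Ex + (-2)*xx^5*yy^2*Ex*Ey + (-1)*xx^5*yy^2*Ex*Ey^2) * h6 + ((-1)*xx^2*yy^4*Ex*Ey*Eu*Ev + (-1)*xx^2*yy^4*Ex*Ey^2*Eu*Ev + (-1)*xx^2*yy^4*Ex^2*Ey*Eu*Ev + (-1)*xx^2*yy^4*Ex^2*Ey^2*Eu*Ev + 2*xx^3*yy^3*Ex*Ey*Eu*Ev + 2*xx^3*yy^3*Ex*Ey^2*Eu*Ev + 2*xx^3*yy^3*Ex^2*Ey*Eu*Ev + 2*xx^3*yy^3*Ex^2*Ey^2*Eu*Ev + (-1)*xx^4*yy^2*Ex*Ey*Eu*Ev + (-1)*xx^4*yy^2*Ex*Ey^2*Eu*Ev + (-1)*xx^4*yy^2*Ex^2*Ey*Eu*Ev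 + (-1)*xx^4*yy^2*Ex^2*Ey^2*Eu*Ev) * h7 + (1*xx*yy^5*Ex*Ey*Eu*Ev + 1*xx*yy^5*Ex*Ey^2*Eu*Ev + 1*xx*yy^5*Ex^2*Ey*Eu*Ev + 1*xx*yy^5*Ex^2*Ey^2*Eu*Ev + (-3)*xx^2*yy^4*Ex*Ey*Eu*Ev + (-3)*xx^2*yy^4*Ex*Ey^2*Eu*Ev + (-3)*xx^2*yy^4*Ex^2*Ey*Eu*Ev + (-3)*xx^2*yy^4*Ex^2*Ey^2*Eu*Ev + 3*xx^3*yy^3*Ex*Ey*Eu*Ev + 3*xx^3*yy^3*Ex*Ey^2*Eu*Ev + 3*xx^3*yy^3*Ex^2*Ey*Eu*Ev + 3*xx^3*yy^3*Ex^2*Ey^2*Eu*Ev + (-1)*xx^4*yy^2*Ex*Ey*Eu*Ev + (-1)*xx^4*yy^2*Ex*Ey^2*Eu*Ev + (-1)*xx^4*yy^2*Ex^2*Ey*Eu*Ev + (-1)*xx^4*yy^2*Ex^2*Ey^2*Eu*Ev) * h8 + (1*xx^2*yy^4*Ex*Ey*Eu*Ev + 1*xx^2*yy^4*Ex*Ey^2*Eu*Ev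 + 1*xx^2*yy^4*Ex^2*Ey*Eu*Ev + 1*xx^2*yy^4*Ex^2*Ey^2*Eu*Ev + (-3)*xx^3*yy^3*Ex*Ey*Eu*Ev + (-3)*xx^3*yy^3*Ex*Ey^2*Eu*Ev + (-3)*xx^3*yy^3*Ex^2*Ey*Eu*Ev + (-3)*xx^3*yy^3*Ex^2*Ey^2*Eu*Ev + 3*xx^4*yy^2*Ex*Ey*Eu*Ev + 3*xx^4*yy^2*Ex*Ey^2*Eu*Ev + 3*xx^4*yy^2*Ex^2*Ey*Eu*Ev + 3*xx^4*yy^2*Ex^2*Ey^2*Eu*Ev + (-1)*xx^5*yy*Ex*Ey*Eu*Ev + (-1)*xx^5*yy*Ex*Ey^2*Eu*Ev + (-1)*xx^5*yy*Ex^2*Ey*Eu*Ev + (-1)*xx^5*yy*Ex^2*Ey^2*Eu*Ev) * h9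

lemma c2_Ee (n : ℕ) : PowerSeries.coeff (R := ℚ) n Ee = if n = 0 then 0 else (1 : ℚ)/(n.factorial : ℚ) := by
  rcases n with _ | n
  · simp [Ee, PowerSeries.exp, coeff_mk, PowerSeries.coeff_one,
      Algebra.algebraMap_self, RingHom.id_apply]
  · simp [Ee, PowerSeries.exp, coeff_mk, PowerSeries.coeff_one,
      Algebra.algebraMap_self, RingHom.id_apply]

lemma ne_aux {F : A} {k m : ℕ} (h : c2 k m F ≠ 0) : F ≠ 0 := by
  intro h0
  apply h
  rw [h0]
  simp [c2]

lemma xx_ne : xx ≠ 0 := by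
  apply ne_aux (k := 1) (m := 0)
  rw [c2_xx]
  norm_num

lemma yysubxx_ne : yy - xx ≠ 0 := by
  apply ne_aux (k := 1) (m := 0)
  rw [show c2 1 0 (yy - xx) = c2 1 0 yy - c2 1 0 xx by simp [c2, map_sub], c2_xx, c2_yy]
  norm_num

lemma yy_ne : yy ≠ 0 := by
  apply ne_aux (k := 0) (m := 1)
  rw [c2_yy]
  norm_num

lemma Ex_ne : Ex ≠ 0 := by
  apply ne_aux (k := 1) (m := 0)
  rw [Ex, show ((Phi 1 0) Ee) = phiFun 1 0 Ee from rfl, c2_phiFun, c2_Ee]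
  norm_num

lemma Ey_ne : Ey ≠ 0 := by
  apply ne_aux (k := 0) (m := 1)
  rw [Ey, show ((Phi 0 1) Ee) = phiFun 0 1 Ee from rfl, c2_phiFun, c2_Ee]
  norm_num

lemma Eu_ne : Eu ≠ 0 := by
  apply ne_aux (k := 1) (m := 0)
  rw [Eu, show ((Phi (-1) 1) Ee) = phiFun (-1) 1 Ee from rfl, c2_phiFun, c2_Ee]
  norm_num

lemma Ev_ne : Ev ≠ 0 := by
  apply ne_aux (k := 1) (m := 0)
  rw [Ev, show ((Phi 1 (-1)) Ee) = phiFun 1 (-1) Ee from rfl, c2_phiFun, c2_Ee]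
  norm_num

lemma oneEx_ne : (1 : A) + Ex ≠ 0 := by
  apply ne_aux (k := 0) (m := 0)
  rw [show c2 0 0 (1 + Ex) = c2 0 0 1 + c2 0 0 Ex by simp [c2, map_add], c2_one,
    Ex, show ((Phi 1 0) Ee) = phiFun 1 0 Ee from rfl, c2_phiFun, c2_Ee]
  norm_num

lemma oneEy_ne : (1 : A) + Ey ≠ 0 := by
  apply ne_aux (k := 0) (m := 0)
  rw [show c2 0 0 (1 + Ey) = c2 0 0 1 + c2 0 0 Ey by simp [c2, map_add], c2_one,
    Ey, show ((Phi 0 1) Ee) = phiFun 0 1 Ee from rfl, c2_phiFun, c2_Ee]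
  norm_num

set_option maxHeartbeats 1000000 in
lemma Zzero : Zz = 0 := by
  have hmu : (xx^2 * yy^2 * (yy - xx)^3 * Ex * Ey * Eu * Ev * (1+Ex) * (1+Ey)) ≠ 0 :=
    mul_ne_zero (mul_ne_zero (mul_ne_zero (mul_ne_zero (mul_ne_zero (mul_ne_zero (mul_ne_zero
      (mul_ne_zero (pow_ne_zero 2 xx_ne) (pow_ne_zero 2 yy_ne)) (pow_ne_zero 3 yysubxx_ne))
      Ex_ne) Ey_ne) Eu_ne) Ev_ne) oneEx_ne) oneEy_ne
  rcases mul_eq_zero.mp hZero with h | h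
  · exact absurd h hmu
  · exact h


lemma hc1 (k m : ℕ) : ((k.factorial : ℚ) * m.factorial) * c2 k m (fu * fx)
    = ∑ j ∈ range (k+1), (-1 : ℚ)^j * (k.choose j) * beta (m+j) * beta (k-j) := by
  rw [c2_mul]
  have hin : ∀ i ∈ range (k+1), ∑ j ∈ range (m+1), c2 i j fu * c2 (k-i) (m-j) fx
      = c2 i m fu * c2 (k-i) 0 fx := by
    intro i _
    have h := Finset.sum_eq_single_of_mem m (self_mem_range_succ m)
      (f := fun j => c2 i j fu * c2 (k-i) (m-j) fx) ?_
    · rw [Nat.sub_self] at h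
      exact h
    · intro j hj hjm
      rw [mem_range] at hj
      rw [fx, c2_ffPhi, zero_pow (show m - j ≠ 0 by omega)]
      ring
  rw [Finset.sum_congr rfl hin, Finset.mul_sum]
  apply Finset.sum_congr rfl
  intro i hi
  rw [mem_range] at hi
  rw [fu, fx, c2_ffPhi, c2_ffPhi]
  have h1 := cast_choose_fact i m
  have h2 := cast_choose_fact i (k - i)
  rw [show i + (k - i) = k by omega] at h2
  have hf : ∀ n : ℕ, ((n.factorial : ℚ)) ≠ 0 := fun n => by exact_mod_cast n.factorial_ne_zero
  rw [show m + i = i + m by omega]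
  have key2 : (k.factorial : ℚ) * m.factorial * ((i+m).choose i)
      = (k.choose i : ℚ) * ((i+m).factorial) * ((k-i).factorial) := by
    linear_combination (-((m.factorial : ℚ) * ((i+m).choose i))) * h2
      + ((k.choose i : ℚ) * ((k-i).factorial : ℚ)) * h1
  simp only [one_pow, pow_zero, Nat.add_zero, Nat.choose_self, Nat.cast_one]
  field_simp
  linear_combination beta (i+m) * beta (k-i) * key2

lemma hc2 (k m : ℕ) : ((k.factorial : ℚ) * m.factorial) * c2 k m (fv * fy)
    = ∑ j ∈ range (m+1), (-1 : ℚ)^j * (m.choose j) * beta (k+j) * beta (m-j) := by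
  rw [c2_mul]
  have hout : ∑ i ∈ range (k+1), ∑ j ∈ range (m+1), c2 i j fv * c2 (k-i) (m-j) fy
      = ∑ j ∈ range (m+1), c2 k j fv * c2 0 (m-j) fy := by
    have h := Finset.sum_eq_single_of_mem k (self_mem_range_succ k)
      (f := fun i => ∑ j ∈ range (m+1), c2 i j fv * c2 (k-i) (m-j) fy) ?_
    · rw [Nat.sub_self] at h
      exact h
    · intro i hi hik
      rw [mem_range] at hi
      apply Finset.sum_eq_zero
      intro j _
      rw [fy, c2_ffPhi, zero_pow (show k - i ≠ 0 by omega)]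
      ring
  rw [hout, Finset.mul_sum]
  apply Finset.sum_congr rfl
  intro j hj
  rw [mem_range] at hj
  rw [fv, fy, c2_ffPhi, c2_ffPhi]
  have h1 := cast_choose_fact k j
  have h2 := cast_choose_fact j (m - j)
  rw [show j + (m - j) = m by omega] at h2
  have hf : ∀ n : ℕ, ((n.factorial : ℚ)) ≠ 0 := fun n => by exact_mod_cast n.factorial_ne_zero
  have key2 : (m.factorial : ℚ) * k.factorial * ((k+j).choose k)
      = (m.choose j : ℚ) * ((k+j).factorial) * ((m-j).factorial) := by
    linear_combination (-((k.factorial : ℚ) * ((k+j).choose k))) * h2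
      + ((m.choose j : ℚ) * ((m-j).factorial : ℚ)) * h1
  simp only [one_pow, pow_zero, Nat.zero_add, Nat.choose_zero_right, Nat.cast_one]
  field_simp
  linear_combination beta (k+j) * beta (m-j) * key2

lemma hc3 (k m : ℕ) : ((k.factorial : ℚ) * m.factorial) * c2 k m (fx * fy)
    = beta k * beta m := by
  rw [c2_mul]
  have hin : ∀ i ∈ range (k+1), ∑ j ∈ range (m+1), c2 i j fx * c2 (k-i) (m-j) fy
      = c2 i 0 fx * c2 (k-i) m fy := by
    intro i _
    have h := Finset.sum_eq_single_of_mem 0 (mem_range.mpr (Nat.succ_pos m))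
      (f := fun j => c2 i j fx * c2 (k-i) (m-j) fy) ?_
    · rw [Nat.sub_zero] at h
      exact h
    · intro j hj hj0
      rw [fx, c2_ffPhi, zero_pow hj0]
      ring
  rw [Finset.sum_congr rfl hin]
  have hout : ∑ i ∈ range (k+1), c2 i 0 fx * c2 (k-i) m fy = c2 k 0 fx * c2 (k-k) m fy := by
    apply Finset.sum_eq_single_of_mem k (self_mem_range_succ k)
    intro i hi hik
    rw [mem_range] at hi
    rw [fy, c2_ffPhi, zero_pow (show k - i ≠ 0 by omega)]
    ring
  rw [Nat.sub_self] at hout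
  rw [hout, fx, fy, c2_ffPhi, c2_ffPhi]
  have hf : ∀ n : ℕ, ((n.factorial : ℚ)) ≠ 0 := fun n => by exact_mod_cast n.factorial_ne_zero
  simp only [one_pow, pow_zero, Nat.add_zero, Nat.zero_add, Nat.choose_self, Nat.choose_zero_right, Nat.cast_one]
  field_simp

lemma hcD (k m : ℕ) : ((k.factorial : ℚ) * m.factorial) * c2 k m Dd
    = (k.factorial : ℚ) * m.factorial / ((k+m+1).factorial) * beta (k+m+1) := by
  rw [c2_Dd]
  ring

lemma hcP (k m : ℕ) : ((k.factorial : ℚ) * m.factorial) * c2 k m Pp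
    = (-1 : ℚ)^k / (k+1) * beta (k+m+1) := by
  rw [c2_Pp, Nat.factorial_succ k]
  have hf : ∀ n : ℕ, ((n.factorial : ℚ)) ≠ 0 := fun n => by exact_mod_cast n.factorial_ne_zero
  have hk1 : ((k : ℚ) + 1) ≠ 0 := by positivity
  push_cast
  field_simp

lemma hcQ (k m : ℕ) : ((k.factorial : ℚ) * m.factorial) * c2 k m Qq
    = (-1 : ℚ)^m / (m+1) * beta (k+m+1) := by
  rw [c2_Qq, Nat.factorial_succ m]
  have hf : ∀ n : ℕ, ((n.factorial : ℚ)) ≠ 0 := fun n => by exact_mod_cast n.factorial_ne_zero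
  have hm1 : ((m : ℚ) + 1) ≠ 0 := by positivity
  push_cast
  field_simp

lemma main (k m : ℕ) :
    (∑ j ∈ range (k+1), (-1 : ℚ)^j * (k.choose j) * beta (m+j) * beta (k-j))
      + (∑ j ∈ range (m+1), (-1 : ℚ)^j * (m.choose j) * beta (k+j) * beta (m-j))
      = beta k * beta m
        - ((k.factorial : ℚ) * (m.factorial) / ((k+m+1).factorial)
            + (-1 : ℚ)^k / (k+1) + (-1 : ℚ)^m / (m+1)) * beta (k+m+1) := by
  have h0 : c2 k m Zz = 0 := by rw [Zzero]; simp [c2]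
  have hexp : c2 k m Zz = c2 k m (fu * fx) + c2 k m (fv * fy) - c2 k m (fx * fy)
      + c2 k m Dd + c2 k m Pp + c2 k m Qq := by
    rw [Zz]
    simp [c2, map_add, map_sub]
  rw [hexp] at h0
  linear_combination ((k.factorial : ℚ) * m.factorial) * h0 - hc1 k m - hc2 k m + hc3 k m
    - hcD k m - hcP k m - hcQ k m

end Niels


theorem nielsen_reciprocity (k m : ℕ) :
    (∑ j ∈ range (k+1), (-1 : ℚ)^j * (k.choose j) * beta (m+j) * beta (k-j))
      + (∑ j ∈ range (m+1), (-1 : ℚ)^j * (m.choose j) * beta (k+j) * beta (m-j))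
      = beta k * beta m
        - ((k.factorial : ℚ) * (m.factorial) / ((k+m+1).factorial)
            + (-1 : ℚ)^k / (k+1) + (-1 : ℚ)^m / (m+1)) * beta (k+m+1) :=
  Niels.main k m
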